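/- Let m and n be positive coprime integers. Then the number N of rational Dyck words with m letters U and n letters R satisfies (m+n)·N = C(m+n, n), i.e. N = (1/(m+n))·binomial(m+n, n). -/

import Mathlib

/-- A word in the alphabet `{U, R}` (encoded as `Bool`, with `true` = `U` and
`false` = `R`) is a *rational Dyck word* for slope `m/n` if every prefix with
`b` letters `U` and `a` letters `R` satisfies `b * n ≥ a * m`. -/
def IsRationalDyckWord (m n : ℕ) (w : List Bool) : Prop :=
  ∀ k : ℕ, ((w.take k).count true) * n ≥ ((w.take k).count false) * m

namespace RDWAux

open Finset
open Fin.NatCast Fin.CommRing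

lemma count_ofFn {M : ℕ} (g : Fin M → Bool) (b : Bool) :
    (List.ofFn g).count b = (Finset.univ.filter (fun i => g i = b)).card := by
  induction M with
  | zero => simp
  | succ M ih =>
      rw [List.ofFn_succ, List.count_cons, ih]
      simp only [Finset.card_filter]
      rw [Fin.sum_univ_succ]
      cases h : g 0 <;> cases b <;> simp [h, Function.comp, add_comm]

variable {N : ℕ} [NeZero N] {m n : ℕ}

def step (m n : ℕ) (b : Bool) : ℤ := cond b (n : ℤ) (-(m : ℤ))

def S (m n : ℕ) (f : Fin N → Bool) (k : ℕ) : ℤ :=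
  ∑ i ∈ Finset.range k, step m n (f (i : Fin N))

def rot (j : ℕ) (f : Fin N → Bool) : Fin N → Bool :=
  fun i => f (i + (j : Fin N))

lemma S_succ (f : Fin N → Bool) (k : ℕ) :
    S m n f (k + 1) = S m n f k + step m n (f (k : Fin N)) :=
  Finset.sum_range_succ _ _

lemma rot_rot (a b : ℕ) (f : Fin N → Bool) : rot a (rot b f) = rot (b + a) f := by
  funext i
  simp only [rot, Nat.cast_add]
  congr 1
  ring

lemma rot_zero (f : Fin N → Bool) : rot 0 f = f := by
  funext i; simp [rot]

lemma rot_N (f : Fin N → Bool) : rot N f = f := by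
  funext i; simp [rot, Fin.natCast_self]

lemma rot_mod (j : ℕ) (f : Fin N → Bool) : rot j f = rot (j % N) f := by
  have h : ((j : Fin N)) = (((j % N : ℕ) : Fin N)) := by
    ext
    rw [Fin.val_natCast, Fin.val_natCast, Nat.mod_mod]
  funext i
  simp only [rot, h]

lemma S_eq_counts (f : Fin N → Bool) :
    ∀ k, k ≤ N → S m n f k =
      (((List.ofFn f).take k).count true : ℤ) * n -
        (((List.ofFn f).take k).count false : ℤ) * m := by
  intro k
  induction k with
  | zero => simp [S]
  | succ k ih =>
      intro hk
      have hkN : k < N := hk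
      have h1 : (List.ofFn f).take (k + 1) = (List.ofFn f).take k ++ [f ⟨k, hkN⟩] := by
        rw [List.take_succ]
        congr 1
        simp [List.getElem?_ofFn, hkN]
      have h2 : f (k : Fin N) = f ⟨k, hkN⟩ := by
        congr 1
        ext
        simp [Fin.val_natCast, Nat.mod_eq_of_lt hkN]
      rw [S_succ, ih (le_of_lt hkN), h1, h2]
      cases hb : f ⟨k, hkN⟩ <;>
        simp [step, hb, List.count_append] <;> push_cast <;> ring

lemma dyck_iff (f : Fin N → Bool) :
    IsRationalDyckWord m n (List.ofFn f) ↔ ∀ k ≤ N, 0 ≤ S m n f k := by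
  constructor
  · intro h k hk
    rw [S_eq_counts f k hk]
    have h1 := h k
    refine sub_nonneg.mpr ?_
    exact_mod_cast h1
  · intro h k
    rcases le_or_gt k N with hk | hk
    · have h0 := h k hk
      rw [S_eq_counts f k hk] at h0
      have := sub_nonneg.mp h0
      exact_mod_cast this
    · have hlen : (List.ofFn f).length ≤ k := by
        simp only [List.length_ofFn]; omega
      have h0 := h N le_rfl
      rw [S_eq_counts f N le_rfl] at h0
      have := sub_nonneg.mp h0
      rw [List.take_of_length_le (by simp)] at this
      rw [List.take_of_length_le hlen]
      exact_mod_cast this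

lemma S_top (f : Fin N → Bool) (hc1 : (List.ofFn f).count true = m)
    (hc2 : (List.ofFn f).count false = n) : S m n f N = 0 := by
  have h := S_eq_counts (m := m) (n := n) f N le_rfl
  rw [List.take_of_length_le (by simp), hc1, hc2] at h
  rw [h]; ring

lemma S_rot (f : Fin N → Bool) (j k : ℕ) :
    S m n f (j + k) = S m n f j + S m n (rot j f) k := by
  induction k with
  | zero => simp [S]
  | succ k ih =>
      have hc : ((j + k : ℕ) : Fin N) = ((k : Fin N) + (j : Fin N)) := by
        push_cast; ring
      rw [Nat.add_succ, S_succ, S_succ, ih, hc]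
      simp only [rot]
      ring

lemma S_period (f : Fin N → Bool) (hc1 : (List.ofFn f).count true = m)
    (hc2 : (List.ofFn f).count false = n) (k : ℕ) :
    S m n f (N + k) = S m n f k := by
  rw [S_rot, S_top f hc1 hc2, rot_N, zero_add]

lemma S_mod (f : Fin N → Bool) (hc1 : (List.ofFn f).count true = m)
    (hc2 : (List.ofFn f).count false = n) (k : ℕ) :
    S m n f k = S m n f (k % N) := by
  induction k using Nat.strong_induction_on with
  | _ k ih =>
      rcases lt_or_ge k N with h | h
      · rw [Nat.mod_eq_of_lt h]
      · obtain ⟨t, rfl⟩ : ∃ t, k = N + t := ⟨k - N, by omega⟩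
        have hN := NeZero.pos N
        rw [S_period f hc1 hc2, ih t (by omega), Nat.add_mod_left]

lemma S_zmod (hN : m + n = N) (f : Fin N → Bool) (k : ℕ) :
    ((S m n f k : ℤ) : ZMod N) = -((k : ZMod N) * (m : ZMod N)) := by
  have hmn0 : (m : ZMod N) + (n : ZMod N) = 0 := by
    have h : ((m + n : ℕ) : ZMod N) = 0 := by rw [hN]; exact ZMod.natCast_self N
    push_cast at h; exact h
  induction k with
  | zero => simp [S]
  | succ k ih =>
      rw [S_succ]
      push_cast
      rw [ih]
      cases hb : f (k : Fin N) with
      | false =>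
          simp only [step, hb, cond_false]
          push_cast
          ring
      | true =>
          simp only [step, hb, cond_true]
          push_cast
          linear_combination hmn0

lemma S_inj (hN : m + n = N) (hmn : Nat.Coprime m n) (f : Fin N → Bool)
    {j j' : ℕ} (hj : j < N) (hj' : j' < N) (h : S m n f j = S m n f j') : j = j' := by
  have hco : Nat.Coprime m N := by
    rw [← hN]; exact Nat.coprime_self_add_right.mpr hmn
  have h1 : ((S m n f j : ℤ) : ZMod N) = ((S m n f j' : ℤ) : ZMod N) := by rw [h]
  rw [S_zmod hN, S_zmod hN] at h1
  have h2 : (j : ZMod N) * (m : ZMod N) = (j' : ZMod N) * (m : ZMod N) := by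
    have := neg_injective h1; exact this
  have hu : IsUnit ((m : ℕ) : ZMod N) := (ZMod.isUnit_iff_coprime m N).mpr hco
  have h3 : (j : ZMod N) = (j' : ZMod N) := hu.mul_right_cancel h2
  have h4 := congrArg ZMod.val h3
  rwa [ZMod.val_cast_of_lt hj, ZMod.val_cast_of_lt hj'] at h4

lemma rot_dyck_iff (f : Fin N → Bool) (hc1 : (List.ofFn f).count true = m)
    (hc2 : (List.ofFn f).count false = n) {j : ℕ} (hj : j < N) :
    IsRationalDyckWord m n (List.ofFn (rot j f)) ↔ ∀ t < N, S m n f j ≤ S m n f t := by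
  constructor
  · intro hD t ht
    set k : ℕ := if j ≤ t then t - j else t + N - j with hkdef
    have hkN : k ≤ N := by rw [hkdef]; split_ifs <;> omega
    have h0 := (dyck_iff _).mp hD k hkN
    have h1 := S_rot (m := m) (n := n) f j k
    have h2 : S m n f (j + k) = S m n f t := by
      rcases le_or_gt j t with h | h
      · have : j + k = t := by rw [hkdef]; split_ifs <;> omega
        rw [this]
      · have : j + k = N + t := by rw [hkdef]; split_ifs <;> omega
        rw [this, S_period f hc1 hc2]
    linarith
  · intro hmin
    rw [dyck_iff]
    intro k hk
    have h1 := S_rot (m := m) (n := n) f j k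
    have h2 := S_mod f hc1 hc2 (j + k)
    have h3 := hmin ((j + k) % N) (Nat.mod_lt _ (NeZero.pos N))
    linarith

lemma rot_dyck_exists (f : Fin N → Bool) (hc1 : (List.ofFn f).count true = m)
    (hc2 : (List.ofFn f).count false = n) :
    ∃ j < N, IsRationalDyckWord m n (List.ofFn (rot j f)) := by
  obtain ⟨j, hj, hmin⟩ := Finset.exists_min_image (Finset.range N) (S m n f)
    ⟨0, Finset.mem_range.mpr (NeZero.pos N)⟩
  rw [Finset.mem_range] at hj
  refine ⟨j, hj, ?_⟩
  rw [rot_dyck_iff f hc1 hc2 hj]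
  exact fun t ht => hmin t (Finset.mem_range.mpr ht)

lemma rot_dyck_unique (hN : m + n = N) (hmn : Nat.Coprime m n) (f : Fin N → Bool)
    (hc1 : (List.ofFn f).count true = m) (hc2 : (List.ofFn f).count false = n)
    {j j' : ℕ} (hj : j < N) (hj' : j' < N)
    (hD : IsRationalDyckWord m n (List.ofFn (rot j f)))
    (hD' : IsRationalDyckWord m n (List.ofFn (rot j' f))) : j = j' := by
  have h1 := (rot_dyck_iff f hc1 hc2 hj).mp hD j' hj'
  have h2 := (rot_dyck_iff f hc1 hc2 hj').mp hD' j hj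
  exact S_inj hN hmn f hj hj' (le_antisymm h1 h2)

lemma count_rot (f : Fin N → Bool) (j : ℕ) (b : Bool) :
    (List.ofFn (rot j f)).count b = (List.ofFn f).count b := by
  rw [count_ofFn, count_ofFn]
  refine Finset.card_bij' (fun i _ => i + (j : Fin N)) (fun i _ => i - (j : Fin N))
    ?_ ?_ ?_ ?_
  · intro a ha
    simp only [Finset.mem_filter, Finset.mem_univ, true_and] at ha ⊢
    exact ha
  · intro a ha
    simp only [Finset.mem_filter, Finset.mem_univ, true_and, rot] at ha ⊢
    exact Finset.mem_filter.mpr ⟨Finset.mem_univ _, by simpa [rot, sub_add_cancel] using ha⟩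
  · intro a _; simp
  · intro a _; simp

end RDWAux

open RDWAux in
open Classical in
/-- For positive coprime `m`, `n`, the number `N` of rational Dyck words with
`m` letters `U` and `n` letters `R` satisfies `(m + n) * N = (m + n).choose n`,
i.e. `N = 1/(m+n) * binomial (m+n) n`. -/
theorem card_rationalDyckWords (m n : ℕ) (hm : 0 < m) (hn : 0 < n)
    (hmn : Nat.Coprime m n) :
    (m + n) *
      (Finset.univ.filter (fun f : Fin (m + n) → Bool =>
        (List.ofFn f).count true = m ∧ (List.ofFn f).count false = n ∧
          IsRationalDyckWord m n (List.ofFn f))).card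
      = Nat.choose (m + n) n := by
  haveI : NeZero (m + n) := ⟨by omega⟩
  set N := m + n with hN
  clear_value N
  set D := Finset.univ.filter (fun f : Fin N → Bool =>
        (List.ofFn f).count true = m ∧ (List.ofFn f).count false = n ∧
          IsRationalDyckWord m n (List.ofFn f)) with hD
  set A := Finset.univ.filter (fun f : Fin N → Bool =>
        (List.ofFn f).count true = m ∧ (List.ofFn f).count false = n) with hA
  -- Step 1 : A is the disjoint union of rotation orbits of elements of D
  have hmemD : ∀ f, f ∈ D ↔ (List.ofFn f).count true = m ∧
      (List.ofFn f).count false = n ∧ IsRationalDyckWord m n (List.ofFn f) := by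
    intro f; simp [hD]
  have hmemA : ∀ f, f ∈ A ↔ (List.ofFn f).count true = m ∧
      (List.ofFn f).count false = n := by
    intro f; simp [hA]
  have hcover : A = D.biUnion (fun f => (Finset.range N).image (fun j => rot j f)) := by
    ext g
    simp only [Finset.mem_biUnion, Finset.mem_image, Finset.mem_range]
    constructor
    · intro hg
      obtain ⟨hg1, hg2⟩ := (hmemA g).mp hg
      obtain ⟨j, hj, hDj⟩ := rot_dyck_exists g hg1 hg2
      refine ⟨rot j g, ?_, (N - j) % N, Nat.mod_lt _ (NeZero.pos N), ?_⟩
      · rw [hmemD]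
        exact ⟨by rw [count_rot]; exact hg1, by rw [count_rot]; exact hg2, hDj⟩
      · rw [← rot_mod, rot_rot]
        have : j + (N - j) = N := by omega
        rw [this, rot_N]
    · rintro ⟨f, hf, j, hj, rfl⟩
      obtain ⟨hf1, hf2, _⟩ := (hmemD f).mp hf
      rw [hmemA]
      exact ⟨by rw [count_rot]; exact hf1, by rw [count_rot]; exact hf2⟩
  have hdisj : ∀ f ∈ D, ∀ f' ∈ D, f ≠ f' →
      Disjoint ((Finset.range N).image (fun j => rot j f))
        ((Finset.range N).image (fun j => rot j f')) := by
    intro f hf f' hf' hne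
    obtain ⟨hf1, hf2, hfD⟩ := (hmemD f).mp hf
    obtain ⟨hf1', hf2', hfD'⟩ := (hmemD f').mp hf'
    rw [Finset.disjoint_left]
    rintro g hg hg'
    obtain ⟨j, hj, rfl⟩ := Finset.mem_image.mp hg
    obtain ⟨j', hj', he⟩ := Finset.mem_image.mp hg'
    rw [Finset.mem_range] at hj hj'
    apply hne
    have he2 : rot j' f' = rot j f := he
    -- rot j f = rot j' f'  ⟹  f' = rot ((j + (N - j')) % N) f
    have h1 : f' = rot ((j + (N - j')) % N) f := by
      rw [← rot_mod, ← rot_rot, ← he2, rot_rot]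
      have hjj : j' + (N - j') = N := by omega
      rw [hjj, rot_N]
    have hDf' : IsRationalDyckWord m n (List.ofFn (rot ((j + (N - j')) % N) f)) := by
      rw [← h1]; exact hfD'
    have h0 : (j + (N - j')) % N = 0 := by
      exact rot_dyck_unique hN.symm hmn f hf1 hf2
        (Nat.mod_lt _ (NeZero.pos N)) (NeZero.pos N) hDf' (by rw [rot_zero]; exact hfD)
    rw [h1, h0, rot_zero]
  have hinj : ∀ f ∈ D, ((Finset.range N).image (fun j => rot j f)).card = N := by
    intro f hf
    obtain ⟨hf1, hf2, hfD⟩ := (hmemD f).mp hf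
    rw [Finset.card_image_of_injOn, Finset.card_range]
    intro j hj j' hj' he
    have he' : rot j f = rot j' f := he
    rw [Finset.mem_coe, Finset.mem_range] at hj hj'
    -- rot j f = rot j' f ⟹ f = rot ((j' + (N - j)) % N) f ... use uniqueness with 0
    have h1 : f = rot ((j' + (N - j)) % N) f := by
      have hstep : rot ((j' + (N - j)) % N) f = rot (N - j) (rot j' f) := by
        rw [← rot_mod, ← rot_rot]
      rw [hstep, ← he', rot_rot]
      have hjj : j + (N - j) = N := by omega
      rw [hjj, rot_N]
    have hDf : IsRationalDyckWord m n (List.ofFn (rot ((j' + (N - j)) % N) f)) := by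
      rw [← h1]; exact hfD
    have h0 : (j' + (N - j)) % N = 0 := by
      exact rot_dyck_unique hN.symm hmn f hf1 hf2
        (Nat.mod_lt _ (NeZero.pos N)) (NeZero.pos N) hDf (by rw [rot_zero]; exact hfD)
    rcases Nat.lt_or_ge (j' + (N - j)) N with hc | hc
    · rw [Nat.mod_eq_of_lt hc] at h0; omega
    · have h2 : j' + (N - j) - N < N := by omega
      rw [Nat.mod_eq_sub_mod hc, Nat.mod_eq_of_lt h2] at h0
      omega
  have hcard1 : A.card = N * D.card := by
    rw [hcover, Finset.card_biUnion hdisj]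
    rw [Finset.sum_congr rfl hinj, Finset.sum_const, smul_eq_mul, mul_comm]
  -- Step 2 : A.card = N.choose n
  have hcard2 : A.card = N.choose n := by
    have hb : A.card = (Finset.powersetCard n (Finset.univ : Finset (Fin N))).card := by
      refine Finset.card_bij' (fun f _ => Finset.univ.filter (fun i => f i = false))
        (fun s _ => fun i => decide (i ∉ s)) ?_ ?_ ?_ ?_
      · intro f hf
        obtain ⟨hf1, hf2⟩ := (hmemA f).mp hf
        rw [Finset.mem_powersetCard]
        exact ⟨Finset.filter_subset _ _, by rw [← count_ofFn]; exact hf2⟩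
      · intro s hs
        rw [Finset.mem_powersetCard] at hs
        rw [hmemA]
        constructor
        · rw [count_ofFn]
          have : (Finset.univ.filter (fun i => decide (i ∉ s) = true)) = sᶜ := by
            ext i; simp
          rw [this, Finset.card_compl, hs.2]
          simp [hN]
        · rw [count_ofFn]
          have : (Finset.univ.filter (fun i => decide (i ∉ s) = false)) = s := by
            ext i; simp
          rw [this, hs.2]
      · intro f hf
        funext i
        by_cases h : f i = false <;> simp [h]
      · intro s hs
        ext i
        simp
    rw [hb, Finset.card_powersetCard, Finset.card_univ, Fintype.card_fin]
  rw [← hcard1, hcard2]
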